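/- Let μ solve μ' = λφ(μ), μ(0) = μ₀, and define the stopping-time CDF H_t(r) = 1 − φ(μ(t))/φ(μ(t−r)) for 0 ≤ r < t, H_t(r) = 1 for r ≥ t. Then the expectation of the corresponding random variable T_t (taking values in [0, t], with atom of mass φ(μ(t))/φ(μ₀) at r = t) equals E[T_t] = (1/λ)·φ(μ(t))·∫_{μ₀}^{μ(t)} dw/φ(w)². -/

import Mathlib

open MeasureTheory Set Filter

/-- if T_t takes values in [0, t] and P(T_t ≥ r) = φ(μ(t))/φ(μ(t−r)) for
0 ≤ r < t (with the remaining mass φ(μ(t))/φ(μ₀) at r = t), then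
E[T_t] = (1/λ)·φ(μ(t))·∫_{μ₀}^{μ(t)} dw/φ(w)². -/
theorem stmt16 {Ω : Type*} [MeasurableSpace Ω] (P : Measure Ω) [IsProbabilityMeasure P]
    (X : Ω → ℝ) (hX : Measurable X)
    (hint : Integrable (fun ω => max (X ω) 0) P)
    (F : ℝ → ℝ) (hF : ∀ x, F x = (P {ω | X ω ≤ x}).toReal)
    (M : EReal) (hM : M = sSup ((fun x : ℝ => (x : EReal)) '' {x : ℝ | F x < 1}))
    (φ : ℝ → ℝ) (hφ : ∀ x, φ x = ∫ u in Ioi x, (1 - F u))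
    (lam μ₀ : ℝ) (hlam : 0 < lam) (hμ₀ : 0 ≤ μ₀) (hμ₀M : (μ₀ : EReal) < M)
    (μ : ℝ → ℝ) (hinit : μ 0 = μ₀)
    (hode : ∀ s : ℝ, 0 ≤ s → HasDerivAt μ (lam * φ (μ s)) s)
    (t : ℝ) (ht : 0 ≤ t)
    {Ω' : Type*} [MeasurableSpace Ω'] (Q : Measure Ω') [IsProbabilityMeasure Q]
    (T : Ω' → ℝ) (hT : Measurable T)
    (hT0 : ∀ ω, 0 ≤ T ω) (hTt : ∀ ω, T ω ≤ t)
    (hTail : ∀ r : ℝ, 0 ≤ r → r < t →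
      (Q {ω | r ≤ T ω}).toReal = φ (μ t) / φ (μ (t - r))) :
    (∫ ω, T ω ∂Q) = (1 / lam) * φ (μ t) * ∫ w in μ₀..(μ t), 1 / (φ w) ^ 2 := by
  -- basic facts about F
  have hFmono : Monotone F := by
    intro a b hab
    rw [hF a, hF b]
    exact ENNReal.toReal_mono (measure_ne_top _ _)
      (measure_mono (fun ω h => le_trans h hab))
  have hF0 : ∀ u, 0 ≤ F u := fun u => by rw [hF u]; positivity
  have hF1 : ∀ u, F u ≤ 1 := fun u => by
    rw [hF u]
    calc (P {ω | X ω ≤ u}).toReal ≤ (P univ).toReal :=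
      ENNReal.toReal_mono (measure_ne_top _ _) (measure_mono (subset_univ _))
    _ = 1 := by simp
  have hmeas : Measurable fun u => 1 - F u := measurable_const.sub hFmono.measurable
  -- integrability of 1 - F on right tails
  have hIoi : ∀ x : ℝ, IntegrableOn (fun u => 1 - F u) (Ioi x) := by
    intro x
    have htail : ∀ r : ℝ, ENNReal.ofReal (1 - F r) = P {ω | r < X ω} := by
      intro r
      have hc : P {ω | r < X ω} = 1 - P {ω | X ω ≤ r} := by
        have : {ω | r < X ω} = {ω | X ω ≤ r}ᶜ := by ext ω; simp [not_le]
        rw [this]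
        exact prob_compl_eq_one_sub (show MeasurableSet {ω | X ω ≤ r} from hX measurableSet_Iic)
      rw [hF r, hc, ENNReal.ofReal_sub _ ENNReal.toReal_nonneg, ENNReal.ofReal_one,
        ENNReal.ofReal_toReal (measure_ne_top _ _)]
    have h0 : IntegrableOn (fun u => 1 - F u) (Ioi 0) := by
      refine ⟨hmeas.aestronglyMeasurable, ?_⟩
      rw [hasFiniteIntegral_iff_norm]
      have hkey := lintegral_eq_lintegral_meas_lt P
        (ae_of_all _ (fun ω => le_max_right (X ω) 0)) hint.aemeasurable
      have hlt : (∫⁻ r in Ioi (0:ℝ), P {a | r < max (X a) 0}) < ⊤ := by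
        rw [← hkey]; exact hint.lintegral_lt_top
      refine lt_of_le_of_lt (le_of_eq ?_) hlt
      refine setLIntegral_congr_fun measurableSet_Ioi (fun r hr => ?_)
      have h1 : ‖(1 : ℝ) - F r‖ = 1 - F r := by
        rw [Real.norm_eq_abs, abs_of_nonneg (by linarith [hF1 r])]
      rw [h1, htail r]
      congr 1
      ext a
      simp only [mem_setOf_eq, lt_max_iff]
      exact ⟨Or.inl, fun h => h.elim id (fun h0 => absurd h0 (not_lt.2 (le_of_lt hr)))⟩
    have h1 : IntegrableOn (fun u => 1 - F u) (Ioc x 0) := by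
      refine Measure.integrableOn_of_bounded (by simp) hmeas.aestronglyMeasurable (M := 1) ?_
      refine ae_of_all _ fun u => ?_
      rw [Real.norm_eq_abs, abs_of_nonneg (by linarith [hF1 u])]
      linarith [hF0 u]
    exact (h1.union h0).mono_set (fun u hu => by
      rcases le_or_gt u 0 with h | h
      · exact Or.inl ⟨hu, h⟩
      · exact Or.inr h)
  -- splitting identity for φ
  have hφsplit : ∀ x y : ℝ, x ≤ y →
      φ x = (∫ u in Ioc x y, (1 - F u)) + φ y := by
    intro x y hxy
    rw [hφ x, hφ y, ← Ioc_union_Ioi_eq_Ioi hxy]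
    exact setIntegral_union (Ioc_disjoint_Ioi le_rfl) measurableSet_Ioi
      ((hIoi x).mono_set Ioc_subset_Ioi_self) (hIoi y)
  have hφnonneg : ∀ x, 0 ≤ φ x := by
    intro x
    rw [hφ x]
    exact setIntegral_nonneg measurableSet_Ioi (fun u _ => by linarith [hF1 u])
  have hφanti : Antitone φ := by
    intro a b hab
    rw [hφsplit a b hab]
    have : 0 ≤ ∫ u in Ioc a b, (1 - F u) :=
      setIntegral_nonneg measurableSet_Ioc (fun u _ => by linarith [hF1 u])
    linarith
  -- φ is 1-Lipschitz, hence continuous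
  have hφcont : Continuous φ := by
    have : LipschitzWith 1 φ := by
      refine LipschitzWith.of_dist_le_mul fun a b => ?_
      wlog hab : a ≤ b generalizing a b
      · rw [dist_comm, dist_comm a b]; exact this b a (le_of_not_ge hab)
      have hsplit := hφsplit a b hab
      have hle : (∫ u in Ioc a b, (1 - F u)) ≤ ∫ _u in Ioc a b, (1 : ℝ) := by
        refine setIntegral_mono_on ((hIoi a).mono_set Ioc_subset_Ioi_self)
          (integrableOn_const (by simp) (by simp)) measurableSet_Ioc
          (fun u _ => by linarith [hF0 u])
      have h1 : (∫ _u in Ioc a b, (1 : ℝ)) = b - a := by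
        simp [Real.volume_Ioc, ENNReal.toReal_ofReal (sub_nonneg.2 hab), hab]
      have h0 : 0 ≤ ∫ u in Ioc a b, (1 - F u) :=
        setIntegral_nonneg measurableSet_Ioc (fun u _ => by linarith [hF1 u])
      rw [Real.dist_eq, Real.dist_eq, NNReal.coe_one, one_mul,
        abs_of_nonpos (by linarith : a - b ≤ 0), abs_le]
      constructor <;> linarith
    exact this.continuous
  -- μ is continuous and monotone on [0, ∞)
  have hμcontOn : ContinuousOn μ (Ici 0) :=
    fun s hs => ((hode s hs).continuousAt).continuousWithinAt
  have hμmono : MonotoneOn μ (Ici 0) := by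
    refine monotoneOn_of_deriv_nonneg (convex_Ici 0) hμcontOn ?_ ?_
    · intro s hs
      rw [interior_Ici] at hs
      exact ((hode s (le_of_lt hs)).differentiableAt).differentiableWithinAt
    · intro s hs
      rw [interior_Ici] at hs
      rw [(hode s (le_of_lt hs)).deriv]
      exact mul_nonneg (le_of_lt hlam) (hφnonneg _)
  rcases eq_or_lt_of_le ht with h0 | htpos
  · -- case t = 0
    have hT0' : T = fun _ => 0 := funext fun ω =>
      le_antisymm (le_trans (hTt ω) (le_of_eq h0.symm)) (hT0 ω)
    rw [hT0', ← h0, hinit]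
    simp
  · -- main case t > 0
    -- φ (μ t) > 0
    have hμtpos : 0 < φ (μ t) := by
      rcases (hφnonneg (μ t)).lt_or_eq with h | h
      · exact h
      · exfalso
        have h1 := hTail 0 le_rfl htpos
        have huniv : {ω | (0:ℝ) ≤ T ω} = univ := eq_univ_of_forall hT0
        rw [sub_zero, ← h, div_zero, huniv] at h1
        simp at h1
    -- values of μ on [0, t] lie in [μ₀, μ t] and φ is positive there
    have hμset : ∀ s ∈ Icc (0:ℝ) t, μ₀ ≤ μ s ∧ μ s ≤ μ t := by
      intro s hs
      constructor
      · rw [← hinit]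
        exact hμmono (mem_Ici.2 le_rfl) hs.1 hs.1
      · exact hμmono hs.1 (le_trans hs.1 hs.2 : (0:ℝ) ≤ t) hs.2
    have hφpos : ∀ w, w ≤ μ t → 0 < φ w := fun w hw => lt_of_lt_of_le hμtpos (hφanti hw)
    -- the substituted integrand
    set g : ℝ → ℝ := fun w => (1 / lam) * φ (μ t) * (1 / φ w ^ 2) with hg
    -- integrability of T
    have hTint : Integrable T Q := by
      refine ⟨hT.aestronglyMeasurable, HasFiniteIntegral.of_bounded (C := t) ?_⟩
      exact ae_of_all _ fun ω => by
        rw [Real.norm_eq_abs, abs_of_nonneg (hT0 ω)]; exact hTt ω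
    -- layer cake
    have step1 : (∫ ω, T ω ∂Q) = ∫ r in Ioc 0 t, (Q {a | r ≤ T a}).toReal :=
      hTint.integral_eq_integral_Ioc_meas_le (ae_of_all _ hT0) (ae_of_all _ hTt)
    -- plug in the tail formula
    have step2 : (∫ r in Ioc 0 t, (Q {a | r ≤ T a}).toReal)
        = ∫ r in Ioc 0 t, φ (μ t) / φ (μ (t - r)) := by
      refine setIntegral_congr_ae measurableSet_Ioc ?_
      have hne : ∀ᵐ r : ℝ, r ≠ t := by
        rw [ae_iff]
        have hset : {a : ℝ | ¬ a ≠ t} = {t} := by ext r; simp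
        rw [hset, Real.volume_singleton]
      filter_upwards [hne] with r hr hmem
      exact hTail r (le_of_lt hmem.1) (lt_of_le_of_ne hmem.2 hr)
    -- reflect the integration variable
    have step3 : (∫ r in Ioc 0 t, φ (μ t) / φ (μ (t - r)))
        = ∫ s in (0:ℝ)..t, φ (μ t) / φ (μ s) := by
      rw [← intervalIntegral.integral_of_le ht]
      have := intervalIntegral.integral_comp_sub_left
        (a := 0) (b := t) (fun s => φ (μ t) / φ (μ s)) t
      rw [sub_zero, sub_self] at this
      exact this
    -- rewrite the integrand using the ODE
    have step4 : (∫ s in (0:ℝ)..t, φ (μ t) / φ (μ s))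
        = ∫ s in (0:ℝ)..t, (lam * φ (μ s)) • g (μ s) := by
      refine intervalIntegral.integral_congr fun s hs => ?_
      rw [uIcc_of_le ht] at hs
      have hpos : 0 < φ (μ s) := hφpos _ (hμset s hs).2
      rw [hg]
      simp only [smul_eq_mul]
      field_simp
    -- change of variables w = μ s
    have step5 : (∫ s in (0:ℝ)..t, (lam * φ (μ s)) • g (μ s))
        = ∫ w in (μ 0)..(μ t), g w := by
      refine intervalIntegral.integral_comp_smul_deriv' (f := μ)
        (f' := fun s => lam * φ (μ s)) (g := g) ?_ ?_ ?_
      · intro s hs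
        rw [uIcc_of_le ht] at hs
        exact hode s hs.1
      · rw [uIcc_of_le ht]
        exact continuous_const.continuousOn.mul
          (hφcont.comp_continuousOn (hμcontOn.mono (fun s hs => hs.1)))
      · rw [uIcc_of_le ht]
        refine ContinuousOn.mul continuous_const.continuousOn ?_
        refine ContinuousOn.div continuous_const.continuousOn
          ((hφcont.comp continuous_id).continuousOn.pow 2) ?_
        rintro w ⟨s, hs, rfl⟩
        exact pow_ne_zero 2 (ne_of_gt (hφpos _ (hμset s hs).2))
    rw [step1, step2, step3, step4, step5, hinit, ← intervalIntegral.integral_const_mul]
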